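/- arXiv:1407.4145 — 2 statements merged into one kernel-verified Lean document; each statement's English description precedes it below -/
import Mathlib

section
/- For any real α, positive integers m and k, the following identity holds for all real x: x·L_{k-2}^{α+2}(x)·L_m^{-α-1}(-x) + (m+1)·L_{k-1}^{α+1}(x)·L_{m+1}^{-α-2}(-x) = (k+α)·L_{k-2}^{α+1}(x)·L_m^{-α-1}(-x) + (m+1)·L_{k-1}^{α+1}(x)·L_{m+1}^{-α-1}(-x) - (m+k)·L_{k-1}^{α+1}(x)·L_m^{-α-1}(-x). -/
open Finset

/-- Generalized Laguerre polynomial `L_n^α(x) = ∑_{k=0}^n (-1)^k binom(n+α, n-k) x^k / k!`. -/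
noncomputable def lag (α : ℝ) (n : ℕ) (x : ℝ) : ℝ :=
  ∑ k ∈ Finset.range (n + 1),
    (-1 : ℝ) ^ k * (∏ j ∈ Finset.range (n - k), (α + (k : ℝ) + 1 + (j : ℝ))) /
      ((Nat.factorial (n - k) : ℝ) * (Nat.factorial k : ℝ)) * x ^ k

/-- Generalized Laguerre polynomial with integer index, with the convention
`L_n^α := 0` for `n < 0`. -/
noncomputable def lagZ (α : ℝ) (n : ℤ) (x : ℝ) : ℝ :=
  if 0 ≤ n then lag α n.toNat x else 0

/-- The coefficient of `x^j` in `lag α n`. -/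
noncomputable def co (α : ℝ) (n j : ℕ) : ℝ :=
  (-1 : ℝ) ^ j * (∏ i ∈ Finset.range (n - j), (α + (j : ℝ) + 1 + (i : ℝ))) /
    ((Nat.factorial (n - j) : ℝ) * (Nat.factorial j : ℝ))

lemma lag_eq (α : ℝ) (n : ℕ) (x : ℝ) :
    lag α n x = ∑ j ∈ Finset.range (n + 1), co α n j * x ^ j := rfl

lemma fact_ne (d : ℕ) : ((Nat.factorial d : ℝ)) ≠ 0 :=
  Nat.cast_ne_zero.2 (Nat.factorial_ne_zero d)

lemma prod_aux (c : ℝ) (d : ℕ) :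
    ∏ i ∈ Finset.range (d + 1), (c + (i : ℝ))
      = c * ∏ i ∈ Finset.range d, (c + 1 + (i : ℝ)) := by
  rw [Finset.prod_range_succ']
  simp only [Nat.cast_zero, add_zero]
  rw [mul_comm]
  exact congrArg (fun t => c * t)
    (Finset.prod_congr rfl fun i _ => by push_cast; ring)

lemma coB (β : ℝ) (n j : ℕ) (hj : j ≤ n) :
    co (β - 1) (n + 1) j = co β (n + 1) j - co β n j := by
  obtain ⟨d, hd⟩ : ∃ d, n - j = d := ⟨n - j, rfl⟩
  have h1 : n + 1 - j = d + 1 := by omega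
  unfold co
  rw [h1, hd]
  have eA : ∏ i ∈ Finset.range (d + 1), (β - 1 + (j : ℝ) + 1 + (i : ℝ))
      = (β + j) * ∏ i ∈ Finset.range d, (β + (j : ℝ) + 1 + (i : ℝ)) := by
    rw [show (∏ i ∈ Finset.range (d + 1), (β - 1 + (j : ℝ) + 1 + (i : ℝ)))
        = ∏ i ∈ Finset.range (d + 1), ((β + (j : ℝ)) + (i : ℝ)) from
      Finset.prod_congr rfl fun i _ => by ring]
    rw [prod_aux (β + j) d]
  have eB : ∏ i ∈ Finset.range (d + 1), (β + (j : ℝ) + 1 + (i : ℝ))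
      = (∏ i ∈ Finset.range d, (β + (j : ℝ) + 1 + (i : ℝ))) * (β + (j : ℝ) + 1 + (d : ℝ)) :=
    Finset.prod_range_succ _ _
  rw [eA, eB, Nat.factorial_succ]
  have hdf := fact_ne d
  have hjf := fact_ne j
  push_cast
  field_simp
  ring

lemma coB_top (β : ℝ) (n : ℕ) :
    co (β - 1) (n + 1) (n + 1) = co β (n + 1) (n + 1) := by
  unfold co
  simp [Nat.sub_self]

lemma sum_splitB {n : ℕ} (f g h : ℕ → ℝ) (H : ∀ j ≤ n, f j = g j - h j)
    (Htop : f (n + 1) = g (n + 1)) :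
    ∑ j ∈ Finset.range (n + 1 + 1), f j
      = ∑ j ∈ Finset.range (n + 1 + 1), g j - ∑ j ∈ Finset.range (n + 1), h j := by
  rw [Finset.sum_range_succ f, Finset.sum_range_succ g, Htop]
  rw [show ∑ j ∈ Finset.range (n + 1), f j
      = ∑ j ∈ Finset.range (n + 1), (g j - h j) from
    Finset.sum_congr rfl fun j hj => H j (Nat.lt_succ_iff.mp (Finset.mem_range.mp hj))]
  rw [Finset.sum_sub_distrib]
  ring

lemma lagB (β : ℝ) (n : ℕ) (x : ℝ) :
    lag (β - 1) (n + 1) x = lag β (n + 1) x - lag β n x := by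
  rw [lag_eq, lag_eq, lag_eq]
  exact sum_splitB _ _ _
    (fun j hj => by rw [coB β n j hj]; ring)
    (by rw [coB_top β n])

lemma coA_zero (α : ℝ) (n : ℕ) :
    ((n : ℝ) + 2 + α) * co (α + 1) n 0 = ((n : ℝ) + 1) * co (α + 1) (n + 1) 0 := by
  unfold co
  simp only [Nat.sub_zero, pow_zero, Nat.factorial_zero, Nat.cast_zero, Nat.cast_one, mul_one,
    one_mul]
  rw [Finset.prod_range_succ, Nat.factorial_succ]
  have hnf := fact_ne n
  push_cast
  field_simp
  ring

lemma coA_top (α : ℝ) (n : ℕ) :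
    co (α + 2) n n = -(((n : ℝ) + 1) * co (α + 1) (n + 1) (n + 1)) := by
  unfold co
  simp only [Nat.sub_self, Finset.range_zero, Finset.prod_empty, Nat.factorial_zero,
    Nat.cast_one, one_mul]
  rw [Nat.factorial_succ]
  have hnf := fact_ne n
  push_cast
  field_simp
  ring

lemma coA (α : ℝ) (n j : ℕ) (hj : j < n) :
    co (α + 2) n j
      = ((n : ℝ) + 2 + α) * co (α + 1) n (j + 1) - ((n : ℝ) + 1) * co (α + 1) (n + 1) (j + 1) := by
  obtain ⟨d, hd⟩ : ∃ d, n - j = d + 1 := ⟨n - j - 1, by omega⟩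
  have h1 : n - (j + 1) = d := by omega
  have h2 : n + 1 - (j + 1) = d + 1 := by omega
  have hn : (n : ℝ) = (j : ℝ) + 1 + (d : ℝ) := by
    have : n = j + 1 + d := by omega
    rw [this]; push_cast; ring
  unfold co
  rw [hd, h1, h2]
  have eA : ∏ i ∈ Finset.range (d + 1), (α + 2 + (j : ℝ) + 1 + (i : ℝ))
      = (∏ i ∈ Finset.range d, (α + 1 + ((j : ℝ) + 1) + 1 + (i : ℝ))) * ((n : ℝ) + 2 + α) := by
    rw [Finset.prod_range_succ]
    congr 1
    · exact Finset.prod_congr rfl fun i _ => by ring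
    · rw [hn]; ring
  have eC : ∏ i ∈ Finset.range (d + 1), (α + 1 + ((j : ℝ) + 1) + 1 + (i : ℝ))
      = (∏ i ∈ Finset.range d, (α + 1 + ((j : ℝ) + 1) + 1 + (i : ℝ))) * ((n : ℝ) + 2 + α) := by
    rw [Finset.prod_range_succ]
    congr 1
    rw [hn]; ring
  push_cast
  rw [eA, eC, Nat.factorial_succ d, Nat.factorial_succ j]
  have hdf := fact_ne d
  have hjf := fact_ne j
  push_cast
  rw [hn]
  field_simp
  ring

lemma sum_splitA {n : ℕ} (f g h : ℕ → ℝ)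
    (H : ∀ j < n, f j = g (j + 1) - h (j + 1))
    (Htop : f n = -h (n + 1)) (H0 : g 0 = h 0) :
    ∑ j ∈ Finset.range (n + 1), f j
      = ∑ j ∈ Finset.range (n + 1), g j - ∑ j ∈ Finset.range (n + 2), h j := by
  rw [Finset.sum_range_succ f, Finset.sum_range_succ' g, Finset.sum_range_succ' h,
    Finset.sum_range_succ (fun j => h (j + 1))]
  rw [show ∑ j ∈ Finset.range n, f j
      = ∑ j ∈ Finset.range n, (g (j + 1) - h (j + 1)) from
    Finset.sum_congr rfl fun j hj => H j (Finset.mem_range.mp hj)]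
  rw [Finset.sum_sub_distrib, Htop, H0]
  ring

lemma lagA (α : ℝ) (n : ℕ) (x : ℝ) :
    x * lag (α + 2) n x
      = ((n : ℝ) + 2 + α) * lag (α + 1) n x - ((n : ℝ) + 1) * lag (α + 1) (n + 1) x := by
  rw [lag_eq, lag_eq, lag_eq, Finset.mul_sum, Finset.mul_sum, Finset.mul_sum]
  rw [show ∑ j ∈ Finset.range (n + 1), x * (co (α + 2) n j * x ^ j)
      = ∑ j ∈ Finset.range (n + 1), co (α + 2) n j * x ^ (j + 1) from
    Finset.sum_congr rfl fun j _ => by ring]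
  exact sum_splitA (fun j => co (α + 2) n j * x ^ (j + 1))
    (fun j => ((n : ℝ) + 2 + α) * (co (α + 1) n j * x ^ j))
    (fun j => ((n : ℝ) + 1) * (co (α + 1) (n + 1) j * x ^ j))
    (fun j hj => by
      show co (α + 2) n j * x ^ (j + 1)
          = ((n : ℝ) + 2 + α) * (co (α + 1) n (j + 1) * x ^ (j + 1))
            - ((n : ℝ) + 1) * (co (α + 1) (n + 1) (j + 1) * x ^ (j + 1))
      rw [coA α n j hj]; ring)
    (by
      show co (α + 2) n n * x ^ (n + 1)
          = -(((n : ℝ) + 1) * (co (α + 1) (n + 1) (n + 1) * x ^ (n + 1)))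
      rw [coA_top α n]; ring)
    (by
      show ((n : ℝ) + 2 + α) * (co (α + 1) n 0 * x ^ 0)
          = ((n : ℝ) + 1) * (co (α + 1) (n + 1) 0 * x ^ 0)
      rw [pow_zero, mul_one, mul_one, coA_zero α n])

/-- alternative representation of the Type III exceptional
`X_m`-Laguerre polynomial. -/
theorem typeIII_alt_rep (α : ℝ) (m k : ℕ) (hm : 0 < m) (hk : 0 < k) (x : ℝ) :
    x * lagZ (α + 2) ((k : ℤ) - 2) x * lag (-α - 1) m (-x)
      + ((m : ℝ) + 1) * lag (α + 1) (k - 1) x * lag (-α - 2) (m + 1) (-x)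
    = ((k : ℝ) + α) * lagZ (α + 1) ((k : ℤ) - 2) x * lag (-α - 1) m (-x)
      + ((m : ℝ) + 1) * lag (α + 1) (k - 1) x * lag (-α - 1) (m + 1) (-x)
      - ((m : ℝ) + (k : ℝ)) * lag (α + 1) (k - 1) x * lag (-α - 1) m (-x) := by
  have hB : lag (-α - 2) (m + 1) (-x)
      = lag (-α - 1) (m + 1) (-x) - lag (-α - 1) m (-x) := by
    have h := lagB (-α - 1) m (-x)
    rw [show (-α - 1 - 1 : ℝ) = -α - 2 by ring] at h
    exact h
  rcases Nat.lt_or_ge k 2 with hk2 | hk2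
  · have hk1 : k = 1 := by omega
    subst hk1
    have hz : ∀ β : ℝ, lagZ β (((1 : ℕ) : ℤ) - 2) x = 0 := by
      intro β; unfold lagZ; norm_num
    rw [hz, hz, hB]
    norm_num
    ring
  · obtain ⟨n, rfl⟩ : ∃ n, k = n + 2 := ⟨k - 2, by omega⟩
    have hz : ∀ β : ℝ, lagZ β (((n + 2 : ℕ) : ℤ) - 2) x = lag β n x := by
      intro β
      have h1 : ((n + 2 : ℕ) : ℤ) - 2 = (n : ℤ) := by push_cast; ring
      rw [h1]
      unfold lagZ
      simp
    rw [hz, hz]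
    have hk1 : (n + 2 : ℕ) - 1 = n + 1 := by omega
    rw [hk1]
    have hA := lagA α n x
    have hc : ((n + 2 : ℕ) : ℝ) = (n : ℝ) + 2 := by push_cast; ring
    rw [hc]
    linear_combination (lag (-α - 1) m (-x)) * hA
      + ((m : ℝ) + 1) * lag (α + 1) (n + 1) x * hB
end

section
/- Let α be real, m a positive integer, and ψ(x) = L_m^{-α-1}(-x). Then on any interval where ψ and ψ' are nonzero, the weight functions W_m^{III,α}(x) = x^α e^{-x}/ψ(x)^2 and W_{m-1}^{III,α-1}(x) = x^{α-1} e^{-x}/ψ'(x)^2 satisfy W_m^{III,α}(x) + m·W_{m-1}^{III,α-1}(x) = -d/dx [ x^α e^{-x} / (ψ(x)·ψ'(x)) ]. -/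
open Finset

lemma lag_zero (β x : ℝ) : lag β 0 x = 1 := by simp [lag]

lemma lag_one (β y : ℝ) : lag β 1 y = β + 1 - y := by
  simp [lag, Finset.sum_range_succ]
  ring

lemma lag_hasDerivAt (β : ℝ) (n : ℕ) (x : ℝ) :
    HasDerivAt (fun y => lag β (n+1) y) (-(lag (β+1) n x)) x := by
  have h : HasDerivAt (fun y => lag β (n+1) y)
      (∑ k ∈ Finset.range (n + 2),
        (-1 : ℝ) ^ k * (∏ j ∈ Finset.range (n + 1 - k), (β + (k : ℝ) + 1 + (j : ℝ))) /
          ((Nat.factorial (n + 1 - k) : ℝ) * (Nat.factorial k : ℝ)) * ((k : ℝ) * x ^ (k - 1))) x := by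
    unfold lag
    exact HasDerivAt.fun_sum (fun k _ => (hasDerivAt_pow k x).const_mul _)
  convert h using 1
  rw [Finset.sum_range_succ']
  simp only [Nat.cast_zero, zero_mul, mul_zero, add_zero]
  unfold lag
  rw [neg_eq_iff_eq_neg, ← Finset.sum_neg_distrib]
  refine Finset.sum_congr rfl fun k hk => ?_
  have h1 : n + 1 - (k + 1) = n - k := by omega
  rw [h1, Nat.factorial_succ]
  have hprod : (∏ j ∈ Finset.range (n - k), (β + ((k:ℕ)+1 : ℕ) + 1 + (j : ℝ)))
      = ∏ j ∈ Finset.range (n - k), ((β+1) + (k : ℝ) + 1 + (j : ℝ)) :=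
    Finset.prod_congr rfl (fun j _ => by push_cast; ring)
  push_cast
  rw [show (∏ j ∈ Finset.range (n - k), (β + ((k:ℝ)+1) + 1 + (j : ℝ)))
      = ∏ j ∈ Finset.range (n - k), ((β+1) + (k : ℝ) + 1 + (j : ℝ)) from
    Finset.prod_congr rfl (fun j _ => by ring)]
  have hf1 : (Nat.factorial (n-k) : ℝ) ≠ 0 := Nat.cast_ne_zero.mpr (Nat.factorial_ne_zero _)
  have hf2 : (Nat.factorial k : ℝ) ≠ 0 := Nat.cast_ne_zero.mpr (Nat.factorial_ne_zero _)
  have hk1 : ((k:ℝ)+1) ≠ 0 := by positivity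
  field_simp
  ring

lemma lag_recur (β : ℝ) (n : ℕ) (y : ℝ) :
    ((n:ℝ)+2) * lag β (n+2) y
      = (β+1-y) * lag (β+1) (n+1) y - y * lag (β+2) n y := by
  have hfac : ∀ p : ℕ, (Nat.factorial p : ℝ) ≠ 0 :=
    fun p => Nat.cast_ne_zero.mpr (Nat.factorial_ne_zero p)
  set B : ℕ → ℝ := fun k =>
    (-1 : ℝ) ^ k * (∏ j ∈ Finset.range (n + 1 - k), ((β+1) + (k : ℝ) + 1 + (j : ℝ))) /
      ((Nat.factorial (n + 1 - k) : ℝ) * (Nat.factorial k : ℝ)) with hB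
  set C : ℕ → ℝ := fun k =>
    (-1 : ℝ) ^ k * (∏ j ∈ Finset.range (n - k), ((β+2) + (k : ℝ) + 1 + (j : ℝ))) /
      ((Nat.factorial (n - k) : ℝ) * (Nat.factorial k : ℝ)) with hC
  set A : ℕ → ℝ := fun k =>
    (-1 : ℝ) ^ k * (∏ j ∈ Finset.range (n + 2 - k), (β + (k : ℝ) + 1 + (j : ℝ))) /
      ((Nat.factorial (n + 2 - k) : ℝ) * (Nat.factorial k : ℝ)) with hA
  have hlagA : lag β (n+2) y = ∑ k ∈ Finset.range (n+3), A k * y ^ k := rfl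
  have hlagB : lag (β+1) (n+1) y = ∑ k ∈ Finset.range (n+2), B k * y ^ k := rfl
  have hlagC : lag (β+2) n y = ∑ k ∈ Finset.range (n+1), C k * y ^ k := rfl
  rw [hlagA, hlagB, hlagC, Finset.mul_sum]
  have e1 : (β+1) * ∑ k ∈ Finset.range (n+2), B k * y ^ k
      = ∑ k ∈ Finset.range (n+3),
          (if k = n + 2 then 0 else (β+1) * (B k * y ^ k)) := by
    conv_rhs => rw [Finset.sum_range_succ]
    rw [if_pos rfl, add_zero, Finset.mul_sum]
    exact Finset.sum_congr rfl fun k hk => by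
      rw [if_neg (by have := Finset.mem_range.mp hk; omega : ¬ k = n + 2)]
  have e2 : y * ∑ k ∈ Finset.range (n+2), B k * y ^ k
      = ∑ k ∈ Finset.range (n+3),
          (if k = 0 then (0:ℝ) else B (k-1) * y ^ k) := by
    conv_rhs => rw [Finset.sum_range_succ']
    rw [if_pos rfl, add_zero, Finset.mul_sum]
    refine Finset.sum_congr rfl fun k hk => ?_
    rw [if_neg (Nat.succ_ne_zero k), Nat.add_sub_cancel]
    ring
  have e3 : y * ∑ k ∈ Finset.range (n+1), C k * y ^ k
      = ∑ k ∈ Finset.range (n+3),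
          (if k = 0 ∨ n + 2 ≤ k then (0:ℝ) else C (k-1) * y ^ k) := by
    conv_rhs => rw [Finset.sum_range_succ']
    rw [if_pos (Or.inl rfl), add_zero]
    conv_rhs => rw [Finset.sum_range_succ]
    rw [if_pos (Or.inr (by omega : n + 2 ≤ n + 1 + 1)), add_zero, Finset.mul_sum]
    refine Finset.sum_congr rfl fun k hk => ?_
    have hk1 := Finset.mem_range.mp hk
    rw [if_neg (by omega), Nat.add_sub_cancel]
    ring
  have split : (β+1-y) * ∑ k ∈ Finset.range (n+2), B k * y ^ k
      = (β+1) * (∑ k ∈ Finset.range (n+2), B k * y ^ k)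
        - y * ∑ k ∈ Finset.range (n+2), B k * y ^ k := by ring
  rw [split, e1, e2, e3, ← Finset.sum_sub_distrib, ← Finset.sum_sub_distrib]
  refine Finset.sum_congr rfl fun k hk => ?_
  have hk3 : k < n + 3 := Finset.mem_range.mp hk
  rcases k with _ | j
  · -- k = 0
    rw [if_neg (by omega : ¬ (0:ℕ) = n + 2), if_pos (Or.inl rfl), sub_zero]
    simp only [hA, hB, pow_zero, Nat.cast_zero, Nat.sub_zero, Nat.factorial_zero]
    rw [show n + 2 = (n+1) + 1 from rfl,
        Finset.prod_range_succ' (fun i => β + (0:ℝ) + 1 + (i:ℝ)) (n+1),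
        Nat.factorial_succ (n+1)]
    rw [show (∏ i ∈ Finset.range (n+1), (β + (0:ℝ) + 1 + (((i:ℕ)+1 : ℕ) : ℝ)))
        = ∏ i ∈ Finset.range (n+1), ((β+1) + (0:ℝ) + 1 + (i:ℝ)) from
      Finset.prod_congr rfl fun i _ => by push_cast; ring]
    push_cast
    field_simp
    ring
  · rcases Nat.lt_or_ge j (n+1) with hj | hj
    · -- middle case: j ≤ n
      have hjn : j ≤ n := by omega
      rw [if_neg (by omega : ¬ j + 1 = n + 2), if_neg (by omega : ¬ j + 1 = 0),
          if_neg (by omega : ¬ (j + 1 = 0 ∨ n + 2 ≤ j + 1)), Nat.add_sub_cancel]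
      simp only [hA, hB, hC]
      have s1 : n + 2 - (j+1) = (n - j) + 1 := by omega
      have s2 : n + 1 - (j+1) = n - j := by omega
      have s3 : n + 1 - j = (n - j) + 1 := by omega
      rw [s1, s2, s3,
          Finset.prod_range_succ' (fun i => β + (((j:ℕ)+1 : ℕ) : ℝ) + 1 + (i:ℝ)) (n-j),
          Nat.factorial_succ (n-j), Nat.factorial_succ j]
      rw [show (∏ i ∈ Finset.range (n-j), (β + (((j:ℕ)+1 : ℕ) : ℝ) + 1 + (((i:ℕ)+1 : ℕ) : ℝ)))
          = ∏ i ∈ Finset.range (n-j), ((β+2) + (j:ℝ) + 1 + (i:ℝ)) from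
        Finset.prod_congr rfl fun i _ => by push_cast; ring]
      rw [show (∏ i ∈ Finset.range ((n-j)+1), ((β+1) + (j:ℝ) + 1 + (i:ℝ)))
          = (∏ i ∈ Finset.range (n-j), ((β+2) + (j:ℝ) + 1 + (i:ℝ))) * (β + (j:ℝ) + 2) from by
        rw [Finset.prod_range_succ' (fun i => (β+1) + (j:ℝ) + 1 + (i:ℝ)) (n-j)]
        refine congrArg₂ _ (Finset.prod_congr rfl fun i _ => by push_cast; ring) (by ring)]
      rw [show (∏ i ∈ Finset.range (n-j), ((β+1) + (((j:ℕ)+1 : ℕ) : ℝ) + 1 + (i:ℝ)))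
          = ∏ i ∈ Finset.range (n-j), ((β+2) + (j:ℝ) + 1 + (i:ℝ)) from
        Finset.prod_congr rfl fun i _ => by push_cast; ring]
      have hcast : ((n - j : ℕ) : ℝ) = (n : ℝ) - (j : ℝ) := Nat.cast_sub hjn
      have h0 : (0:ℝ) ≤ (n:ℝ) - (j:ℝ) := sub_nonneg.mpr (Nat.cast_le.mpr hjn)
      have h5 : (n:ℝ) - (j:ℝ) + 1 ≠ 0 := by positivity
      have h6 : ((j:ℝ) + 1) ≠ 0 := by positivity
      push_cast [hcast]
      field_simp
      ring
    · -- top case: j = n+1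
      have hj1 : j = n + 1 := by omega
      subst hj1
      rw [if_pos rfl, if_neg (by omega : ¬ n + 1 + 1 = 0),
          if_pos (Or.inr (by omega)), sub_zero, Nat.add_sub_cancel]
      simp only [hA, hB]
      rw [show n + 2 - (n + 1 + 1) = 0 from by omega,
          show n + 1 - (n + 1) = 0 from by omega]
      simp only [Finset.range_zero, Finset.prod_empty, Nat.factorial_zero]
      rw [Nat.factorial_succ (n+1), pow_succ ((-1:ℝ)) (n+1)]
      push_cast
      field_simp
      ring

lemma final_algebra (α x E P Q R mr : ℝ) (hx : 0 < x) (hE : E = Real.exp (-x))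
    (hP : P ≠ 0) (hQ : Q ≠ 0)
    (hODE : x * R + (x - α) * Q = mr * P) :
    x ^ α * E / P ^ 2 + mr * (x ^ (α-1) * E / Q ^ 2)
      = -(((α * x ^ (α - 1) * E + x ^ α * -E) * (P * Q)
          - x ^ α * E * (Q * Q + P * R)) / (P * Q) ^ 2) := by
  have hxa : x ^ α = x ^ (α - 1) * x := by
    rw [← Real.rpow_add_one hx.ne' (α - 1)]
    norm_num
  have hR : R = (mr * P - (x - α) * Q) / x := by
    rw [eq_div_iff hx.ne']
    linarith [hODE]
  rw [hxa, hR]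
  field_simp
  ring

/-- with `ψ(x) = L_m^{-α-1}(-x)`, the weights
`W_m^{III,α}(x) = x^α e^{-x}/ψ(x)²` and `W_{m-1}^{III,α-1}(x) = x^{α-1} e^{-x}/ψ'(x)²`
satisfy `W_m^{III,α} + m·W_{m-1}^{III,α-1} = -(x^α e^{-x}/(ψ ψ'))'` wherever
`ψ` and `ψ'` are nonzero. -/
theorem weight_recursion (α : ℝ) (m : ℕ) (hm : 1 ≤ m) (x : ℝ) (hx : 0 < x)
    (h1 : lag (-α - 1) m (-x) ≠ 0)
    (h2 : deriv (fun t => lag (-α - 1) m (-t)) x ≠ 0) :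
    x ^ α * Real.exp (-x) / (lag (-α - 1) m (-x)) ^ 2
        + (m : ℝ) * (x ^ (α - 1) * Real.exp (-x)
            / (deriv (fun t => lag (-α - 1) m (-t)) x) ^ 2)
      = -deriv (fun t => t ^ α * Real.exp (-t)
          / (lag (-α - 1) m (-t) * deriv (fun u => lag (-α - 1) m (-u)) t)) x := by

  set β : ℝ := -α - 1 with hβ
  -- first derivative
  have hpsi : ∀ t : ℝ, HasDerivAt (fun s => lag β m (-s)) (lag (β+1) (m-1) (-t)) t := by
    obtain ⟨n, rfl⟩ : ∃ n, m = n + 1 := ⟨m - 1, by omega⟩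
    intro t
    have h := (lag_hasDerivAt β n (-t)).comp t (hasDerivAt_neg t)
    simpa [Function.comp_def] using h
  have hderiv_pt : ∀ t, deriv (fun u => lag β m (-u)) t = lag (β+1) (m-1) (-t) :=
    fun t => (hpsi t).deriv
  -- second derivative value
  set R : ℝ := if m = 1 then 0 else lag (β+2) (m-2) (-x) with hRdef
  have hphi : HasDerivAt (fun s => lag (β+1) (m-1) (-s)) R x := by
    rcases eq_or_lt_of_le hm with h | h
    · have hm1 : m = 1 := h.symm
      subst hm1
      simp only [hRdef, if_pos rfl]
      have : (fun s : ℝ => lag (β+1) (1-1) (-s)) = fun _ => (1:ℝ) :=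
        funext fun s => lag_zero _ _
      rw [this]
      exact hasDerivAt_const x 1
    · obtain ⟨n, rfl⟩ : ∃ n, m = n + 2 := ⟨m - 2, by omega⟩
      simp only [hRdef, if_neg (by omega : ¬ n + 2 = 1)]
      have h := (lag_hasDerivAt (β+1) n (-x)).comp x (hasDerivAt_neg x)
      show HasDerivAt (fun s => lag (β+1) (n+1) (-s)) (lag (β+2) n (-x)) x
      have hb : β + 1 + 1 = β + 2 := by ring
      simpa [hb, Function.comp_def] using h
  -- the ODE
  have hODE : x * R + (x - α) * lag (β+1) (m-1) (-x) = (m : ℝ) * lag β m (-x) := by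
    rcases eq_or_lt_of_le hm with h | h
    · have hm1 : m = 1 := h.symm
      subst hm1
      simp only [hRdef, if_pos rfl, show (1:ℕ) - 1 = 0 from rfl, lag_zero, lag_one]
      push_cast
      ring
    · obtain ⟨n, rfl⟩ : ∃ n, m = n + 2 := ⟨m - 2, by omega⟩
      simp only [hRdef, if_neg (by omega : ¬ n + 2 = 1)]
      have h := lag_recur β n (-x)
      have hb : β + 1 - -x = x - α := by rw [hβ]; ring
      rw [hb] at h
      show x * lag (β+2) n (-x) + (x - α) * lag (β+1) (n+1) (-x)
          = ((n:ℕ)+2 : ℕ) * lag β (n+2) (-x)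
      push_cast
      linarith [h]
  set P : ℝ := lag β m (-x) with hP
  set Q : ℝ := lag (β+1) (m-1) (-x) with hQ
  have hQne : Q ≠ 0 := by rwa [hderiv_pt x] at h2
  -- rewrite the function inside the outer deriv
  have hfun : (fun t => t ^ α * Real.exp (-t)
        / (lag β m (-t) * deriv (fun u => lag β m (-u)) t))
      = fun t => t ^ α * Real.exp (-t) / (lag β m (-t) * lag (β+1) (m-1) (-t)) := by
    funext t
    rw [hderiv_pt t]
  rw [hfun, hderiv_pt x]
  -- compute the outer derivative
  have hr : HasDerivAt (fun t : ℝ => t ^ α) (α * x ^ (α - 1)) x := by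
    simpa using Real.hasDerivAt_rpow_const (p := α) (Or.inl hx.ne')
  have he : HasDerivAt (fun t : ℝ => Real.exp (-t)) (-Real.exp (-x)) x := by
    simpa using ((hasDerivAt_neg x).exp)
  have hN : HasDerivAt (fun t : ℝ => t ^ α * Real.exp (-t))
      (α * x ^ (α - 1) * Real.exp (-x) + x ^ α * -Real.exp (-x)) x := hr.mul he
  have hg : HasDerivAt (fun t => lag β m (-t) * lag (β+1) (m-1) (-t))
      (Q * Q + P * R) x := by
    have := (hpsi x).mul hphi
    convert this using 1
    all_goals rfl
  have hgne : P * Q ≠ 0 := mul_ne_zero h1 hQne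
  have hF := hN.div hg hgne
  rw [show (fun t : ℝ => t ^ α * Real.exp (-t) / (lag β m (-t) * lag (β+1) (m-1) (-t)))
      = (fun t : ℝ => t ^ α * Real.exp (-t)) / (fun t => lag β m (-t) * lag (β+1) (m-1) (-t))
      from rfl, hF.deriv]
  exact final_algebra α x (Real.exp (-x)) P Q R m hx rfl h1 hQne hODE
end
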